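/- For every real t with 0 < t < 1, the series ∑_{j=1}^∞ j^{-1} e^{-2 j^{2/d} t} (with d a positive integer) is bounded above by 1 - (d/2)·ln t + C for some constant C depending only on d. -/

import Mathlib

open Real Finset

lemma cube_tail (N : ℕ) (hN : 1 ≤ N) :
    ∑' j : ℕ, (((j + N : ℕ) : ℝ) + 1)⁻¹ ^ 3 ≤ 1 / (2 * N * (N + 1)) := by
  set g : ℕ → ℝ := fun j => 1 / (2 * ((N : ℝ) + j) * ((N : ℝ) + j + 1)) with hg
  have hterm : ∀ j : ℕ, (((j + N : ℕ) : ℝ) + 1)⁻¹ ^ 3 ≤ g j - g (j + 1) := by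
    intro j
    have hN1 : (1 : ℝ) ≤ (N : ℝ) := by exact_mod_cast hN
    have hj0 : (0:ℝ) ≤ (j:ℝ) := Nat.cast_nonneg j
    set k : ℝ := (N : ℝ) + j with hkdef
    have hk : (1 : ℝ) ≤ k := by rw [hkdef]; linarith
    have hk0 : 0 < k := by linarith
    have heq : g j - g (j + 1) = 1 / (k * (k + 1) * (k + 2)) := by
      simp only [hg, hkdef]
      push_cast
      field_simp
      ring
    have hcast : (((j + N : ℕ) : ℝ) + 1) = k + 1 := by rw [hkdef]; push_cast; ring
    rw [hcast, heq, inv_pow, inv_eq_one_div]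
    apply one_div_le_one_div_of_le
    · positivity
    · nlinarith
  have hnn : ∀ j : ℕ, (0:ℝ) ≤ (((j + N : ℕ) : ℝ) + 1)⁻¹ ^ 3 := by intro j; positivity
  apply Real.tsum_le_of_sum_range_le hnn
  intro n
  have hgN : (0:ℝ) < (N:ℝ) := by exact_mod_cast hN
  calc ∑ j ∈ range n, (((j + N : ℕ) : ℝ) + 1)⁻¹ ^ 3
      ≤ ∑ j ∈ range n, (g j - g (j + 1)) := Finset.sum_le_sum fun j _ => hterm j
    _ = g 0 - g n := Finset.sum_range_sub' g n
    _ ≤ g 0 := by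
        have hn0 : (0:ℝ) < (N : ℝ) + n := by positivity
        have : 0 ≤ g n := by simp only [hg]; positivity
        linarith
    _ = 1 / (2 * N * (N + 1)) := by simp [hg]

/-- For every integer `d ≥ 1` there is a constant `C` (depending only on `d`)
such that for all `t ∈ (0,1)`,
`∑_{j=1}^∞ j⁻¹ exp(-2 j^(2/d) t) ≤ 1 - (d/2) log t + C`. -/
theorem stmt_0 (d : ℕ) (hd : 1 ≤ d) :
    ∃ C : ℝ, ∀ t : ℝ, 0 < t → t < 1 →
      (∑' j : ℕ, ((j : ℝ) + 1)⁻¹ * Real.exp (-2 * ((j : ℝ) + 1) ^ ((2 : ℝ) / d) * t))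
        ≤ 1 - ((d : ℝ) / 2) * Real.log t + C := by
  have hd0 : (0:ℝ) < d := by exact_mod_cast hd
  refine ⟨Real.log 2 + d.factorial / 2 ^ (d + 1), ?_⟩
  intro t ht ht1
  set f : ℕ → ℝ := fun j => ((j : ℝ) + 1)⁻¹ * Real.exp (-2 * ((j : ℝ) + 1) ^ ((2 : ℝ) / d) * t)
    with hf
  have hfacpos : (0:ℝ) < d.factorial := by exact_mod_cast d.factorial_pos
  -- pointwise cube bound
  have key : ∀ j : ℕ, f j ≤ (d.factorial : ℝ) / (2 ^ d * t ^ d) * (((j : ℝ) + 1)⁻¹ ^ 3) := by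
    intro j
    set r : ℝ := (j : ℝ) + 1 with hr
    have hr1 : (1:ℝ) ≤ r := by rw [hr]; exact le_add_of_nonneg_left (Nat.cast_nonneg j)
    have hr0 : (0:ℝ) < r := by linarith
    have hrp : (0:ℝ) < r ^ ((2:ℝ)/d) := Real.rpow_pos_of_pos hr0 _
    set x : ℝ := 2 * r ^ ((2:ℝ)/d) * t with hx
    have hx0 : 0 < x := by positivity
    have hpow : x ^ d = 2 ^ d * r ^ 2 * t ^ d := by
      have h1 : (r ^ ((2:ℝ)/d)) ^ d = r ^ 2 := by
        rw [← Real.rpow_natCast (r ^ ((2:ℝ)/d)) d, ← Real.rpow_mul hr0.le,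
          div_mul_cancel₀ _ (ne_of_gt hd0), Real.rpow_two]
      rw [hx, mul_pow, mul_pow, h1]
    have hexp : Real.exp (-x) ≤ (d.factorial : ℝ) / x ^ d := by
      rw [Real.exp_neg, inv_eq_one_div, div_le_div_iff₀ (Real.exp_pos x) (by positivity)]
      have h2 := Real.pow_div_factorial_le_exp (x := x) hx0.le d
      rw [div_le_iff₀ hfacpos] at h2
      nlinarith [h2]
    have hfj : f j = r⁻¹ * Real.exp (-x) := by
      simp only [hf, hr, hx]; ring_nf
    rw [hfj]
    have hstep : r⁻¹ * Real.exp (-x) ≤ r⁻¹ * ((d.factorial : ℝ) / x ^ d) :=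
      mul_le_mul_of_nonneg_left hexp (by positivity)
    apply hstep.trans
    rw [hpow]
    have hid : r⁻¹ * ((d.factorial : ℝ) / (2 ^ d * r ^ 2 * t ^ d))
        = (d.factorial : ℝ) / (2 ^ d * t ^ d) * (r⁻¹ ^ 3) := by
      have h1 : r ≠ 0 := hr0.ne'
      have h2 : t ≠ 0 := ht.ne'
      field_simp
      try ring
      try exact Or.inl trivial
    exact le_of_eq hid
  have hfnn : ∀ j, 0 ≤ f j := by intro j; simp only [hf]; positivity
  -- summability
  have hsum3 : Summable (fun j : ℕ => ((j : ℝ) + 1)⁻¹ ^ 3) := by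
    have h := (summable_nat_add_iff 1).2 ((Real.summable_one_div_nat_pow (p := 3)).2 (by norm_num))
    apply h.congr
    intro j
    push_cast
    rw [one_div, inv_pow]
  have hsumf : Summable f :=
    Summable.of_nonneg_of_le hfnn key (hsum3.mul_left _)
  -- choose N
  set N : ℕ := ⌈t ^ (-(d:ℝ)/2)⌉₊ with hN
  have htr : (1:ℝ) < t ^ (-(d:ℝ)/2) :=
    (Real.one_lt_rpow_iff_of_pos ht).2 (Or.inr ⟨ht1, by linarith⟩)
  have htrpos : (0:ℝ) < t ^ (-(d:ℝ)/2) := by linarith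
  have hN1 : 1 ≤ N := Nat.ceil_pos.2 htrpos
  have hNge : t ^ (-(d:ℝ)/2) ≤ (N:ℝ) := Nat.le_ceil _
  have hNle : (N:ℝ) ≤ 2 * t ^ (-(d:ℝ)/2) := by
    have h := Nat.ceil_lt_add_one htrpos.le
    rw [hN]
    linarith
  have hNpos : (0:ℝ) < (N:ℝ) := by exact_mod_cast hN1
  -- split
  rw [← Summable.sum_add_tsum_nat_add N hsumf]
  -- head bound
  have hhead : ∑ j ∈ range N, f j ≤ 1 + Real.log 2 - ((d:ℝ)/2) * Real.log t := by
    have h1 : ∑ j ∈ range N, f j ≤ ∑ j ∈ range N, ((j:ℝ)+1)⁻¹ := by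
      apply Finset.sum_le_sum
      intro j _
      have hj : (0:ℝ) < (j:ℝ)+1 := by positivity
      have he : Real.exp (-2 * ((j:ℝ)+1) ^ ((2:ℝ)/d) * t) ≤ 1 := by
        apply Real.exp_le_one_iff.2
        have hp : (0:ℝ) < ((j:ℝ)+1) ^ ((2:ℝ)/d) := Real.rpow_pos_of_pos hj _
        nlinarith
      calc f j ≤ ((j:ℝ)+1)⁻¹ * 1 := mul_le_mul_of_nonneg_left he (by positivity)
        _ = ((j:ℝ)+1)⁻¹ := mul_one _
    have h2 : ∑ j ∈ range N, ((j:ℝ)+1)⁻¹ = ((harmonic N : ℚ) : ℝ) := by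
      rw [harmonic]
      push_cast
      rfl
    have h3 : ((harmonic N : ℚ) : ℝ) ≤ 1 + Real.log N := harmonic_le_one_add_log N
    have h4 : Real.log N ≤ Real.log 2 + (-(d:ℝ)/2) * Real.log t := by
      calc Real.log N ≤ Real.log (2 * t ^ (-(d:ℝ)/2)) :=
            Real.log_le_log (by positivity) hNle
        _ = Real.log 2 + (-(d:ℝ)/2) * Real.log t := by
            rw [Real.log_mul (by norm_num) (by positivity), Real.log_rpow ht]
    have h12 := h1.trans_eq h2
    ring_nf at h4 ⊢
    ring_nf at h3
    linarith
  -- tail bound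
  have htail : ∑' j, f (j + N) ≤ (d.factorial : ℝ) / 2 ^ (d + 1) := by
    have hNN : (1:ℝ) ≤ t ^ d * ((N:ℝ) * ((N:ℝ) + 1)) := by
      have hsq : t ^ (-(d:ℝ)/2) * t ^ (-(d:ℝ)/2) ≤ (N:ℝ) * ((N:ℝ)+1) := by nlinarith
      have hrw : t ^ (-(d:ℝ)/2) * t ^ (-(d:ℝ)/2) = t ^ (-(d:ℝ)) := by
        rw [← Real.rpow_add ht]; norm_num
      have htd : t ^ d = t ^ ((d:ℝ)) := (Real.rpow_natCast t d).symm
      calc (1:ℝ) = t ^ ((d:ℝ)) * t ^ (-(d:ℝ)) := by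
            rw [← Real.rpow_add ht]; norm_num
        _ ≤ t ^ ((d:ℝ)) * ((N:ℝ) * ((N:ℝ)+1)) := by
            apply mul_le_mul_of_nonneg_left _ (le_of_lt (Real.rpow_pos_of_pos ht _))
            rw [← hrw]; exact hsq
        _ = t ^ d * ((N:ℝ) * ((N:ℝ) + 1)) := by rw [htd]
    have hstep : ∑' j, f (j + N)
        ≤ (d.factorial : ℝ) / (2 ^ d * t ^ d) * ∑' j : ℕ, (((j + N : ℕ):ℝ) + 1)⁻¹ ^ 3 := by
      rw [← tsum_mul_left]
      exact Summable.tsum_le_tsum (fun j => key (j + N)) ((summable_nat_add_iff N).2 hsumf)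
        (((summable_nat_add_iff N).2 hsum3).mul_left _)
    calc ∑' j, f (j + N)
        ≤ (d.factorial : ℝ) / (2 ^ d * t ^ d) * (1 / (2 * N * (N + 1))) :=
          hstep.trans (mul_le_mul_of_nonneg_left (cube_tail N hN1) (by positivity))
      _ ≤ (d.factorial : ℝ) / 2 ^ (d + 1) := by
          rw [div_mul_div_comm, mul_one, div_le_div_iff₀ (by positivity) (by positivity)]
          calc (d.factorial : ℝ) * 2 ^ (d+1) = (d.factorial : ℝ) * (2 ^ d * 2) * 1 := by ring
            _ ≤ (d.factorial : ℝ) * (2 ^ d * 2) * (t ^ d * ((N:ℝ) * ((N:ℝ)+1))) :=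
                mul_le_mul_of_nonneg_left hNN (by positivity)
            _ = (d.factorial : ℝ) * (2 ^ d * t ^ d * (2 * N * (N+1))) := by ring
  linarith [hhead, htail]
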